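/- With g : ℤⁿ → ℤⁿ as above, for every dominant integral weight λ ∈ ℤⁿ (λ_1 ≥ … ≥ λ_n), the (n−1)-fold iterate satisfies g^{n−1}(λ) = (λ_1, …, λ_1, λ_1 − 1, …, λ_1 − 1), where the entry λ_1 appears exactly j(λ) = #{ℓ : λ_ℓ ≡ λ_1 (mod 2)} times. -/

import Mathlib

/-- First step of the operation: `ω′₁ = ω₁`; for `i ≥ 2`, `ω′ᵢ = ω_{i−1}` if
`ω_{i−1} − ωᵢ` is even and `ω′ᵢ = ω_{i−1} − 1` otherwise (0-indexed here). -/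
def gAux (ω : ℕ → ℤ) : ℕ → ℤ := fun i =>
  if i = 0 then ω 0
  else if (ω (i - 1) - ω i) % 2 = 0 then ω (i - 1) else ω (i - 1) - 1

/-- `X = {i : 2 ≤ i ≤ n, ω_{i−1} ≠ ω′ᵢ}` (0-indexed: `1 ≤ i < n`). -/
def gSet (n : ℕ) (ω : ℕ → ℤ) : Finset ℕ :=
  (Finset.Ico 1 n).filter fun i => ω (i - 1) ≠ gAux ω i

/-- `X′ = X` if `#X` is even, and `X` minus its maximal element otherwise. -/
def gSet' (n : ℕ) (ω : ℕ → ℤ) : Finset ℕ :=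
  if Even (gSet n ω).card then gSet n ω
  else (gSet n ω).erase ((gSet n ω).max.unbotD 0)

/-- The map `g : ℤⁿ → ℤⁿ`: `g(ω)ᵢ = ω′ᵢ + 1` if `i ∈ X′` and `g(ω)ᵢ = ω′ᵢ` otherwise. -/
def gMap (n : ℕ) (ω : ℕ → ℤ) : ℕ → ℤ := fun i =>
  if i ∈ gSet' n ω then gAux ω i + 1 else gAux ω i

/-- `j(ω) = #{ℓ < n : ω_ℓ ≡ ω₁ (mod 2)}`. -/
def jCount (n : ℕ) (ω : ℕ → ℤ) : ℕ :=
  ((Finset.range n).filter fun ℓ => ω ℓ % 2 = ω 0 % 2).card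

lemma emod2_iff (a b : ℤ) : (a - b) % 2 = 0 ↔ a % 2 = b % 2 := by omega

lemma gAux_ne_iff {ω : ℕ → ℤ} {i : ℕ} (hi : 1 ≤ i) :
    ω (i - 1) ≠ gAux ω i ↔ ω (i - 1) % 2 ≠ ω i % 2 := by
  have h0 : i ≠ 0 := by omega
  unfold gAux
  by_cases hp : (ω (i - 1) - ω i) % 2 = 0
  · simp [h0, hp, (emod2_iff _ _).1 hp]
  · have := fun h => hp ((emod2_iff _ _).2 h)
    simp only [h0, if_false, hp, if_neg hp]
    constructor
    · intro _; exact this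
    · intro _; omega

lemma mem_gSet {n : ℕ} {ω : ℕ → ℤ} {i : ℕ} :
    i ∈ gSet n ω ↔ 1 ≤ i ∧ i < n ∧ ω (i - 1) % 2 ≠ ω i % 2 := by
  unfold gSet
  simp only [Finset.mem_filter, Finset.mem_Ico]
  constructor
  · rintro ⟨⟨h1, h2⟩, h3⟩
    exact ⟨h1, h2, (gAux_ne_iff h1).1 h3⟩
  · rintro ⟨h1, h2, h3⟩
    exact ⟨⟨h1, h2⟩, (gAux_ne_iff h1).2 h3⟩

lemma gSet'_subset (n : ℕ) (ω : ℕ → ℤ) : gSet' n ω ⊆ gSet n ω := by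
  unfold gSet'
  split
  · exact subset_rfl
  · exact Finset.erase_subset _ _

lemma gMap_zero (n : ℕ) (ω : ℕ → ℤ) : gMap n ω 0 = ω 0 := by
  have h0 : 0 ∉ gSet' n ω := by
    intro h
    have := mem_gSet.1 (gSet'_subset n ω h)
    omega
  simp [gMap, h0, gAux]

lemma unbot_max_mem {s : Finset ℕ} (h : s.Nonempty) : s.max.unbotD 0 ∈ s := by
  rw [← Finset.coe_max' h, WithBot.unbotD_coe]
  exact s.max'_mem h

lemma le_unbot_max {s : Finset ℕ} {x : ℕ} (hx : x ∈ s) : x ≤ s.max.unbotD 0 := by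
  rw [← Finset.coe_max' ⟨x, hx⟩, WithBot.unbotD_coe]
  exact s.le_max' x hx

lemma gMap_eq {n : ℕ} {ω : ℕ → ℤ} {i : ℕ} (h1 : 1 ≤ i) (h2 : i < n) :
    gMap n ω i =
      if ¬ Even (gSet n ω).card ∧ i = (gSet n ω).max.unbotD 0 then ω (i - 1) - 1
      else ω (i - 1) := by
  have h0 : i ≠ 0 := by omega
  by_cases hX : i ∈ gSet n ω
  · have hp : ω (i - 1) % 2 ≠ ω i % 2 := (mem_gSet.1 hX).2.2
    have hp' : (ω (i - 1) - ω i) % 2 ≠ 0 := fun h => hp ((emod2_iff _ _).1 h)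
    have haux : gAux ω i = ω (i - 1) - 1 := by simp [gAux, h0, hp']
    by_cases he : Even (gSet n ω).card
    · have hmem : i ∈ gSet' n ω := by simpa [gSet', he] using hX
      rw [if_neg (by tauto)]
      simp [gMap, hmem, haux]
    · by_cases heq : i = (gSet n ω).max.unbotD 0
      · have hmem : i ∉ gSet' n ω := by
          rw [gSet', if_neg he, heq]
          exact Finset.notMem_erase _ _
        rw [if_pos ⟨he, heq⟩]
        simp [gMap, hmem, haux]
      · have hmem : i ∈ gSet' n ω := by
          rw [gSet', if_neg he, Finset.mem_erase]
          exact ⟨heq, hX⟩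
        rw [if_neg (by tauto)]
        simp [gMap, hmem, haux]
  · have hmem : i ∉ gSet' n ω := fun h => hX (gSet'_subset n ω h)
    have hp : ω (i - 1) % 2 = ω i % 2 := by
      by_contra hp
      exact hX (mem_gSet.2 ⟨h1, h2, hp⟩)
    have haux : gAux ω i = ω (i - 1) := by
      simp [gAux, h0, (emod2_iff _ _).2 hp]
    have hcond : ¬(¬ Even (gSet n ω).card ∧ i = (gSet n ω).max.unbotD 0) := by
      rintro ⟨he, heq⟩
      have hne : (gSet n ω).Nonempty := by
        rw [← Finset.card_pos]
        rcases Nat.eq_zero_or_pos (gSet n ω).card with h | h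
        · exact absurd (h ▸ Even.zero) he
        · exact h
      exact hX (heq ▸ unbot_max_mem hne)
    rw [if_neg hcond]
    simp [gMap, hmem, haux]

lemma gSet_succ (ω : ℕ → ℤ) (m : ℕ) (hm : 1 ≤ m) :
    gSet (m + 1) ω =
      if ω (m - 1) % 2 = ω m % 2 then gSet m ω else insert m (gSet m ω) := by
  have hIco : Finset.Ico 1 (m + 1) = insert m (Finset.Ico 1 m) := by
    ext x; simp [Finset.mem_Ico]; omega
  rw [gSet, hIco, Finset.filter_insert]
  by_cases hp : ω (m - 1) % 2 = ω m % 2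
  · rw [if_neg (fun h => ((gAux_ne_iff hm).1 h) hp), if_pos hp]; rfl
  · rw [if_pos ((gAux_ne_iff hm).2 hp), if_neg hp]; rfl

lemma gSet_card_parity (ω : ℕ → ℤ) :
    ∀ n, 1 ≤ n → (Even (gSet n ω).card ↔ ω (n - 1) % 2 = ω 0 % 2) := by
  intro n
  induction n with
  | zero => omega
  | succ m ih =>
    intro _
    rcases Nat.eq_zero_or_pos m with hm | hm
    · subst hm
      simp [gSet]
    · have ihm := ih hm
      rw [gSet_succ ω m hm]
      have hnm : m ∉ gSet m ω := fun h => by have := mem_gSet.1 h; omega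
      by_cases hp : ω (m - 1) % 2 = ω m % 2
      · rw [if_pos hp]
        simp only [Nat.add_sub_cancel]
        rw [ihm]
        constructor <;> (intro h; omega)
      · rw [if_neg hp, Finset.card_insert_of_notMem hnm]
        simp only [Nat.add_sub_cancel]
        rw [Nat.even_add_one, ihm]
        have h2 : (0:ℤ) ≤ ω (m-1) % 2 ∧ ω (m-1) % 2 < 2 := ⟨Int.emod_nonneg _ (by norm_num), Int.emod_lt_of_pos _ (by norm_num)⟩
        constructor <;> (intro h; omega)

lemma card_filter_shift (n : ℕ) (P : ℕ → Prop) [DecidablePred P] :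
    ((Finset.Ico 1 n).filter fun i => P (i - 1)).card
      = ((Finset.range (n - 1)).filter P).card := by
  induction n with
  | zero => simp
  | succ m ih =>
    rcases Nat.eq_zero_or_pos m with hm | hm
    · subst hm; simp
    · have e1 : Finset.Ico 1 (m + 1) = insert m (Finset.Ico 1 m) := by
        ext x; simp [Finset.mem_Ico]; omega
      have e2 : Finset.range (m + 1 - 1) = insert (m - 1) (Finset.range (m - 1)) := by
        ext x; simp [Finset.mem_range]; omega
      rw [e1, e2, Finset.filter_insert, Finset.filter_insert]
      by_cases hP : P (m - 1)
      · rw [if_pos hP, if_pos hP, Finset.card_insert_of_notMem, Finset.card_insert_of_notMem, ih]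
        · intro h; have := (Finset.mem_filter.1 h).1; simp at this
        · intro h; have := (Finset.mem_filter.1 h).1; simp [Finset.mem_Ico] at this
      · rw [if_neg hP, if_neg hP, ih]

lemma jCount_split (n : ℕ) (hn : 1 ≤ n) (f : ℕ → ℤ) (c : ℤ) (hf : f 0 % 2 = c % 2) :
    jCount n f = 1 + ((Finset.Ico 1 n).filter fun ℓ => f ℓ % 2 = c % 2).card := by
  have e1 : Finset.range n = insert 0 (Finset.Ico 1 n) := by
    ext x; simp [Finset.mem_Ico]; omega
  have e2 : ∀ ℓ, f ℓ % 2 = f 0 % 2 ↔ f ℓ % 2 = c % 2 := fun ℓ => by rw [hf]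
  rw [jCount, e1, Finset.filter_insert, if_pos rfl, Finset.card_insert_of_notMem
    (by intro h; have := (Finset.mem_filter.1 h).1; simp [Finset.mem_Ico] at this)]
  have e3 : ((Finset.Ico 1 n).filter fun ℓ => f ℓ % 2 = f 0 % 2)
      = ((Finset.Ico 1 n).filter fun ℓ => f ℓ % 2 = c % 2) := by
    apply Finset.filter_congr
    intro x _
    simp [e2]
  rw [e3]
  omega

lemma jCount_last_split (n : ℕ) (hn : 1 ≤ n) (f : ℕ → ℤ) :
    jCount n f = ((Finset.range (n - 1)).filter fun ℓ => f ℓ % 2 = f 0 % 2).card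
      + (if f (n - 1) % 2 = f 0 % 2 then 1 else 0) := by
  have e1 : Finset.range n = insert (n - 1) (Finset.range (n - 1)) := by
    ext x; simp [Finset.mem_range]; omega
  rw [jCount, e1, Finset.filter_insert]
  by_cases hp : f (n - 1) % 2 = f 0 % 2
  · rw [if_pos hp, if_pos hp, Finset.card_insert_of_notMem
      (by intro h; have := (Finset.mem_filter.1 h).1; simp [Finset.mem_range] at this)]
  · rw [if_neg hp, if_neg hp]
    omega

lemma jCount_gMap (n : ℕ) (ω : ℕ → ℤ) : jCount n (gMap n ω) = jCount n ω := by
  rcases Nat.eq_zero_or_pos n with h0 | hn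
  · subst h0; simp [jCount]
  have hμ0 : gMap n ω 0 = ω 0 := gMap_zero n ω
  rw [jCount_split n hn (gMap n ω) (ω 0) (by rw [hμ0]),
      jCount_last_split n hn ω]
  by_cases he : Even (gSet n ω).card
  · -- no decrement anywhere
    have hval : ∀ ℓ ∈ Finset.Ico 1 n, gMap n ω ℓ = ω (ℓ - 1) := by
      intro ℓ hℓ
      rw [Finset.mem_Ico] at hℓ
      rw [gMap_eq hℓ.1 hℓ.2, if_neg (by tauto)]
    have hcg : ((Finset.Ico 1 n).filter fun ℓ => gMap n ω ℓ % 2 = ω 0 % 2)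
        = ((Finset.Ico 1 n).filter fun ℓ => ω (ℓ - 1) % 2 = ω 0 % 2) := by
      apply Finset.filter_congr
      intro x hx
      rw [hval x hx]
    rw [hcg, card_filter_shift n (fun m => ω m % 2 = ω 0 % 2)]
    rw [if_pos ((gSet_card_parity ω n hn).1 he)]
    omega
  · -- one decrement at the max
    have hne : (gSet n ω).Nonempty := by
      rw [← Finset.card_pos]
      rcases Nat.eq_zero_or_pos (gSet n ω).card with h | h
      · exact absurd (h ▸ Even.zero) he
      · exact h
    set i₀ := (gSet n ω).max.unbotD 0 with hi₀
    have hi₀mem : i₀ ∈ gSet n ω := unbot_max_mem hne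
    obtain ⟨hi₀1, hi₀n, hi₀p⟩ := mem_gSet.1 hi₀mem
    -- parity of ω (i₀ - 1) is that of ω 0
    have herase : gSet i₀ ω = (gSet n ω).erase i₀ := by
      ext x
      rw [Finset.mem_erase, mem_gSet, mem_gSet]
      constructor
      · rintro ⟨h1, h2, h3⟩
        exact ⟨by omega, h1, by omega, h3⟩
      · rintro ⟨h1, h2, h3, h4⟩
        have hle : x ≤ i₀ := le_unbot_max (mem_gSet.2 ⟨h2, h3, h4⟩)
        exact ⟨h2, by omega, h4⟩
    have hcard : (gSet i₀ ω).card = (gSet n ω).card - 1 := by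
      rw [herase, Finset.card_erase_of_mem hi₀mem]
    have heven : Even (gSet i₀ ω).card := by
      rw [hcard]
      rcases Nat.even_or_odd (gSet n ω).card with h | h
      · exact absurd h he
      · obtain ⟨t, ht⟩ := h; exact ⟨t, by omega⟩
    have hpar : ω (i₀ - 1) % 2 = ω 0 % 2 := (gSet_card_parity ω i₀ hi₀1).1 heven
    -- value at i₀ is decremented
    have hvi₀ : gMap n ω i₀ = ω (i₀ - 1) - 1 := by
      rw [gMap_eq hi₀1 hi₀n, if_pos ⟨he, rfl⟩]
    have hvi₀p : ¬ (gMap n ω i₀ % 2 = ω 0 % 2) := by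
      rw [hvi₀]; omega
    have hval : ∀ ℓ ∈ (Finset.Ico 1 n).erase i₀, gMap n ω ℓ = ω (ℓ - 1) := by
      intro ℓ hℓ
      rw [Finset.mem_erase, Finset.mem_Ico] at hℓ
      rw [gMap_eq hℓ.2.1 hℓ.2.2, if_neg (by tauto)]
    -- count over Ico
    have hIcoe : Finset.Ico 1 n = insert i₀ ((Finset.Ico 1 n).erase i₀) := by
      rw [Finset.insert_erase (Finset.mem_Ico.2 ⟨hi₀1, hi₀n⟩)]
    rw [hIcoe, Finset.filter_insert, if_neg hvi₀p]
    have hcg : (((Finset.Ico 1 n).erase i₀).filter fun ℓ => gMap n ω ℓ % 2 = ω 0 % 2)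
        = (((Finset.Ico 1 n).erase i₀).filter fun ℓ => ω (ℓ - 1) % 2 = ω 0 % 2) := by
      apply Finset.filter_congr
      intro x hx
      rw [hval x hx]
    rw [hcg, Finset.filter_erase, Finset.card_erase_of_mem
        (Finset.mem_filter.2 ⟨Finset.mem_Ico.2 ⟨hi₀1, hi₀n⟩, hpar⟩)]
    rw [card_filter_shift n (fun m => ω m % 2 = ω 0 % 2)]
    have hlastp : ¬ (ω (n - 1) % 2 = ω 0 % 2) := by
      intro h
      exact he ((gSet_card_parity ω n hn).2 h)
    rw [if_neg hlastp]
    -- need the range-count to be positive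
    have hposmem : i₀ - 1 ∈ (Finset.range (n - 1)).filter fun m => ω m % 2 = ω 0 % 2 :=
      Finset.mem_filter.2 ⟨Finset.mem_range.2 (by omega), hpar⟩
    have hpos := Finset.card_pos.2 ⟨_, hposmem⟩
    omega

lemma tail_parity {n : ℕ} {ω : ℕ → ℤ} {b : ℕ} (hb : ∀ x ∈ gSet n ω, x ≤ b) :
    ∀ m, b ≤ m → m < n → ω m % 2 = ω b % 2 := by
  intro m hbm
  induction m, hbm using Nat.le_induction with
  | base => intro _; rfl
  | succ m hm ih =>
    intro hmn
    have h1 : m + 1 ∉ gSet n ω := fun h => by have := hb _ h; omega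
    have hp : ω m % 2 = ω (m + 1) % 2 := by
      by_contra hp
      exact h1 (mem_gSet.2 ⟨by omega, hmn, by simpa using hp⟩)
    rw [← hp]
    exact ih (by omega)

lemma jCount_pos {n : ℕ} (hn : 0 < n) (ω : ℕ → ℤ) : 0 < jCount n ω :=
  Finset.card_pos.2 ⟨0, Finset.mem_filter.2 ⟨Finset.mem_range.2 hn, rfl⟩⟩

lemma step_lemma (n : ℕ) (c : ℤ) (j k : ℕ) (ω : ℕ → ℤ)
    (h0 : ω 0 = c) (hj : jCount n ω = j)
    (hhead : ∀ i, i ≤ k → i < n → ω i = if i < j then c else c - 1) :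
    ∀ i, i ≤ k + 1 → i < n → gMap n ω i = if i < j then c else c - 1 := by
  intro i hik hin
  have hn : 0 < n := by omega
  have hj1 : 1 ≤ j := hj ▸ jCount_pos hn ω
  rcases Nat.eq_zero_or_pos i with hi0 | hi1
  · subst hi0
    rw [gMap_zero, h0, if_pos (by omega)]
  rw [gMap_eq hi1 hin]
  by_cases hjk : k + 1 < j
  · -- Case I: head not yet saturated, all positions ≤ k+1 should be c
    have hilt : i < j := by omega
    have hcond : ¬(¬Even (gSet n ω).card ∧ i = (gSet n ω).max.unbotD 0) := by
      rintro ⟨he, heq⟩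
      have hne : (gSet n ω).Nonempty := by
        rw [← Finset.card_pos]
        rcases Nat.eq_zero_or_pos (gSet n ω).card with h | h
        · exact absurd (h ▸ Even.zero) he
        · exact h
      have himem : i ∈ gSet n ω := heq ▸ unbot_max_mem hne
      obtain ⟨-, -, hip⟩ := mem_gSet.1 himem
      have hXsub : ∀ x ∈ gSet n ω, x ≤ i := fun x hx => heq ▸ le_unbot_max hx
      rcases Nat.lt_or_ge i (k + 1) with hik' | hik'
      · have hv1 : ω (i - 1) = c := by
          rw [hhead (i - 1) (by omega) (by omega), if_pos (by omega)]
        have hv2 : ω i = c := by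
          rw [hhead i (by omega) hin, if_pos (by omega)]
        rw [hv1, hv2] at hip
        exact hip rfl
      · have hvk : ω (i - 1) = c := by
          rw [hhead (i - 1) (by omega) (by omega), if_pos (by omega)]
        have htail := tail_parity hXsub
        rw [hvk] at hip
        have hsub : ((Finset.range n).filter fun ℓ => ω ℓ % 2 = ω 0 % 2)
            ⊆ Finset.range i := by
          intro m hm
          obtain ⟨hmr, hmp⟩ := Finset.mem_filter.1 hm
          rw [Finset.mem_range] at hmr ⊢
          by_contra hge
          have h1 := htail m (by omega) hmr
          rw [h0] at hmp
          omega
        have h2 : jCount n ω ≤ i := by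
          have := Finset.card_le_card hsub
          rw [Finset.card_range] at this
          exact this
        omega
    rw [if_neg hcond, hhead (i - 1) (by omega) (by omega),
        if_pos (show i - 1 < j by omega), if_pos hilt]
  · push_neg at hjk
    have hIIa : ∀ m, j ≤ m → m < n → ω m % 2 ≠ c % 2 := by
      intro m hjm hmn hcon
      have hsub : insert m (Finset.range j) ⊆
          (Finset.range n).filter fun ℓ => ω ℓ % 2 = ω 0 % 2 := by
        intro x hx
        rcases Finset.mem_insert.1 hx with hx | hx
        · subst hx
          exact Finset.mem_filter.2 ⟨Finset.mem_range.2 hmn, by rw [h0]; exact hcon⟩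
        · rw [Finset.mem_range] at hx
          have hxv : ω x = c := by
            rw [hhead x (by omega) (by omega), if_pos hx]
          exact Finset.mem_filter.2 ⟨Finset.mem_range.2 (by omega), by rw [hxv, h0]⟩
      have hcard := Finset.card_le_card hsub
      rw [Finset.card_insert_of_notMem (by simp [Finset.mem_range]; omega),
          Finset.card_range] at hcard
      have hj' : ((Finset.range n).filter fun ℓ => ω ℓ % 2 = ω 0 % 2).card = j := hj
      omega
    by_cases hjn : j < n
    · have hωj : ω j % 2 ≠ c % 2 := hIIa j le_rfl hjn
      have hωj1 : ω (j - 1) = c := by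
        rw [hhead (j - 1) (by omega) (by omega), if_pos (by omega)]
      have hXeq : gSet n ω = {j} := by
        ext x
        rw [mem_gSet, Finset.mem_singleton]
        constructor
        · rintro ⟨hx1, hxn, hxp⟩
          by_contra hxj
          rcases Nat.lt_or_ge x j with h | h
          · have h1 : ω (x - 1) = c := by
              rw [hhead (x - 1) (by omega) (by omega), if_pos (by omega)]
            have h2 : ω x = c := by
              rw [hhead x (by omega) (by omega), if_pos h]
            rw [h1, h2] at hxp
            exact hxp rfl
          · have h1 := hIIa (x - 1) (by omega) (by omega)
            have h2 := hIIa x (by omega) hxn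
            omega
        · intro hx
          subst hx
          refine ⟨by omega, hjn, ?_⟩
          rw [hωj1]
          omega
      have hodd : ¬ Even (gSet n ω).card := by rw [hXeq]; simp
      have hmax : (gSet n ω).max.unbotD 0 = j := by
        rw [hXeq, Finset.max_singleton, WithBot.unbotD_coe]
      rw [hmax]
      rcases Nat.lt_trichotomy i j with h | h | h
      · rw [if_neg (fun hc => absurd hc.2 (by omega)),
            hhead (i - 1) (by omega) (by omega),
            if_pos (show i - 1 < j by omega), if_pos h]
      · rw [if_pos ⟨hodd, h⟩, h, hωj1, if_neg (lt_irrefl j)]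
      · rw [if_neg (fun hc => absurd hc.2 (by omega)),
            hhead (i - 1) (by omega) (by omega),
            if_neg (show ¬(i - 1 < j) by omega), if_neg (by omega)]
    · -- j ≥ n : every entry matches parity, no changes at all
      push_neg at hjn
      have hjle : jCount n ω ≤ n := by
        have := Finset.card_le_card
          (Finset.filter_subset (fun ℓ => ω ℓ % 2 = ω 0 % 2) (Finset.range n))
        rw [Finset.card_range] at this
        exact this
      have hjeq : j = n := by omega
      have hall : ∀ m, m < n → ω m % 2 = ω 0 % 2 := by
        intro m hmn
        have hfeq : ((Finset.range n).filter fun ℓ => ω ℓ % 2 = ω 0 % 2)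
            = Finset.range n := by
          apply Finset.eq_of_subset_of_card_le (Finset.filter_subset _ _)
          rw [Finset.card_range]
          have hj' : ((Finset.range n).filter fun ℓ => ω ℓ % 2 = ω 0 % 2).card = j := hj
          omega
        have := hfeq ▸ Finset.mem_range.2 hmn
        exact (Finset.mem_filter.1 this).2
      have hXe : gSet n ω = ∅ := by
        ext x
        simp only [Finset.notMem_empty, iff_false, mem_gSet]
        rintro ⟨hx1, hxn, hxp⟩
        have h1 := hall (x - 1) (by omega)
        have h2 := hall x hxn
        omega
      have heven : Even (gSet n ω).card := by rw [hXe]; simp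
      rw [if_neg (by tauto), hhead (i - 1) (by omega) (by omega),
          if_pos (show i - 1 < j by omega), if_pos (by omega)]

/-- For every dominant integral weight `λ ∈ ℤⁿ`, the `(n−1)`-fold iterate of `g`
satisfies `g^{n−1}(λ) = (λ₁, …, λ₁, λ₁−1, …, λ₁−1)`, with `λ₁` appearing exactly
`j(λ)` times. -/
theorem gMap_iterate (n : ℕ) (lam : ℕ → ℤ)
    (hdom : ∀ i : ℕ, i + 1 < n → lam (i + 1) ≤ lam i) :
    ∀ i < n, (gMap n)^[n - 1] lam i =
      if i < jCount n lam then lam 0 else lam 0 - 1 := by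
  intro i hin
  have hn : 0 < n := by omega
  have key : ∀ k, jCount n ((gMap n)^[k] lam) = jCount n lam ∧
      ∀ i, i ≤ k → i < n →
        (gMap n)^[k] lam i = if i < jCount n lam then lam 0 else lam 0 - 1 := by
    intro k
    induction k with
    | zero =>
      refine ⟨rfl, ?_⟩
      intro i hi hin'
      have hi0 : i = 0 := by omega
      subst hi0
      rw [if_pos (jCount_pos hn lam)]
      rfl
    | succ m ih =>
      obtain ⟨ihj, ihh⟩ := ih
      rw [Function.iterate_succ_apply']
      have h0 : (gMap n)^[m] lam 0 = lam 0 := by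
        have := ihh 0 (by omega) hn
        rwa [if_pos (jCount_pos hn lam)] at this
      exact ⟨by rw [jCount_gMap]; exact ihj,
        step_lemma n (lam 0) (jCount n lam) m ((gMap n)^[m] lam) h0 ihj ihh⟩
  exact (key (n - 1)).2 i (by omega) hin
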